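/- For all θ, θ' ∈ ℝ^A and every a ∈ A, the gradients of the softmax probabilities satisfy ‖∇_θ π_θ(a) − ∇_{θ'} π_{θ'}(a)‖₂ ≤ 3 ‖θ − θ'‖₂; that is, the map θ ↦ ∇_θ π_θ(a) = π_θ(a)(e_a − π_θ) is 3-Lipschitz. -/

import Mathlib

/-- The softmax distribution on a finite set `A`, viewed as a vector in `ℝ^A`. -/
noncomputable def softmax {A : Type*} [Fintype A] (θ : A → ℝ) (a : A) : ℝ :=
  Real.exp (θ a) / ∑ a' : A, Real.exp (θ a')

section aux

set_option linter.unusedSectionVars false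

variable {A : Type*} [Fintype A] [Nonempty A] [DecidableEq A]

lemma softmax_sum_exp_pos (θ : A → ℝ) : (0:ℝ) < ∑ a' : A, Real.exp (θ a') :=
  Finset.sum_pos (fun _ _ => Real.exp_pos _) Finset.univ_nonempty

lemma softmax_pos (θ : A → ℝ) (a : A) : 0 < softmax θ a :=
  div_pos (Real.exp_pos _) (softmax_sum_exp_pos θ)

lemma sum_softmax (θ : A → ℝ) : ∑ a : A, softmax θ a = 1 := by
  unfold softmax
  rw [← Finset.sum_div, div_self (softmax_sum_exp_pos θ).ne']

lemma softmax_le_one (θ : A → ℝ) (a : A) : softmax θ a ≤ 1 := by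
  have := Finset.single_le_sum (f := fun a => softmax θ a)
    (fun b _ => (softmax_pos θ b).le) (Finset.mem_univ a)
  rwa [sum_softmax] at this

/-- The Fréchet derivative of `η ↦ softmax η a`. -/
noncomputable def smD (θ : EuclideanSpace ℝ A) (a : A) : EuclideanSpace ℝ A →L[ℝ] ℝ :=
  softmax θ a • ((EuclideanSpace.proj a : EuclideanSpace ℝ A →L[ℝ] ℝ)
    - ∑ b : A, softmax θ b • (EuclideanSpace.proj b : EuclideanSpace ℝ A →L[ℝ] ℝ))

lemma smD_apply (θ : EuclideanSpace ℝ A) (a : A) (v : EuclideanSpace ℝ A) :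
    smD θ a v = softmax θ a * (v a - ∑ b : A, softmax θ b * v b) := by
  simp [smD, ContinuousLinearMap.sum_apply]

lemma hasFDerivAt_softmax (θ : EuclideanSpace ℝ A) (a : A) :
    HasFDerivAt (fun η : EuclideanSpace ℝ A => softmax η a) (smD θ a) θ := by
  set S : EuclideanSpace ℝ A → ℝ := fun η => ∑ a' : A, Real.exp (η a') with hSdef
  have hS : (0:ℝ) < S θ := softmax_sum_exp_pos θ
  have hexp : ∀ b : A, HasFDerivAt (fun η : EuclideanSpace ℝ A => Real.exp (η b))
      (Real.exp (θ b) • (EuclideanSpace.proj b : EuclideanSpace ℝ A →L[ℝ] ℝ)) θ := fun b => by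
    have := (Real.hasDerivAt_exp (θ b)).comp_hasFDerivAt θ
      (EuclideanSpace.proj b : EuclideanSpace ℝ A →L[ℝ] ℝ).hasFDerivAt
    exact this
  have hsum : HasFDerivAt S
      (∑ b : A, Real.exp (θ b) • (EuclideanSpace.proj b : EuclideanSpace ℝ A →L[ℝ] ℝ)) θ :=
    HasFDerivAt.fun_sum (fun b _ => hexp b)
  have hinv : HasFDerivAt (fun η : EuclideanSpace ℝ A => (S η)⁻¹)
      ((-((S θ) ^ 2)⁻¹) • ∑ b : A, Real.exp (θ b) • (EuclideanSpace.proj b :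
        EuclideanSpace ℝ A →L[ℝ] ℝ)) θ :=
    (hasDerivAt_inv hS.ne').comp_hasFDerivAt θ hsum
  have hmul := (hexp a).mul hinv
  have heq : (fun η : EuclideanSpace ℝ A => softmax η a)
      = fun η : EuclideanSpace ℝ A => Real.exp (η a) * (S η)⁻¹ := by
    funext η
    simp [softmax, div_eq_mul_inv, hSdef]
  rw [heq]
  refine hmul.congr_fderiv ?_
  ext v
  have hsm : ∀ b, softmax θ b = Real.exp (θ b) / S θ := fun b => rfl
  have hv : ∀ b : A, (EuclideanSpace.proj b : EuclideanSpace ℝ A →L[ℝ] ℝ) v = v b :=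
    fun b => rfl
  simp only [ContinuousLinearMap.add_apply, ContinuousLinearMap.coe_smul', Pi.smul_apply,
    ContinuousLinearMap.sum_apply, smul_eq_mul, hv, smD_apply]
  have hsum2 : ∑ b : A, softmax θ b * v b = (∑ b : A, Real.exp (θ b) * v b) / S θ := by
    rw [Finset.sum_div]
    exact Finset.sum_congr rfl fun b _ => by rw [hsm b]; ring
  rw [hsum2, hsm a]
  have hS' : S θ ≠ 0 := hS.ne'
  field_simp
  ring

/-- The softmax map as a self-map on Euclidean space. -/
noncomputable def smP (θ : EuclideanSpace ℝ A) : EuclideanSpace ℝ A :=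
  (EuclideanSpace.equiv A ℝ).symm (fun a' => softmax θ a')

/-- The Fréchet derivative of the softmax map. -/
noncomputable def smJ (θ : EuclideanSpace ℝ A) :
    EuclideanSpace ℝ A →L[ℝ] EuclideanSpace ℝ A :=
  (((EuclideanSpace.equiv A ℝ).symm : (A → ℝ) →L[ℝ] EuclideanSpace ℝ A)).comp
    (ContinuousLinearMap.pi fun a' => smD θ a')

lemma smP_apply (θ : EuclideanSpace ℝ A) (a : A) : smP θ a = softmax θ a := rfl

lemma smJ_apply (θ : EuclideanSpace ℝ A) (v : EuclideanSpace ℝ A) (a : A) :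
    smJ θ v a = smD θ a v := rfl

lemma hasFDerivAt_smP (θ : EuclideanSpace ℝ A) : HasFDerivAt smP (smJ θ) θ := by
  have h : HasFDerivAt (fun η : EuclideanSpace ℝ A => (fun a' => softmax η a'))
      (ContinuousLinearMap.pi fun a' => smD θ a') θ :=
    hasFDerivAt_pi.2 fun a' => hasFDerivAt_softmax θ a'
  exact ((EuclideanSpace.equiv A ℝ).symm.comp_hasFDerivAt_iff).2 h

lemma coord_abs_le_norm (x : EuclideanSpace ℝ A) (a : A) : |x a| ≤ ‖x‖ := by
  rw [EuclideanSpace.norm_eq, ← Real.sqrt_sq (abs_nonneg (x a))]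
  apply Real.sqrt_le_sqrt
  calc |x a| ^ 2 = ‖x a‖ ^ 2 := by rw [Real.norm_eq_abs]
    _ ≤ ∑ b : A, ‖x b‖ ^ 2 := Finset.single_le_sum
        (f := fun b => ‖x b‖ ^ 2) (fun b _ => sq_nonneg _) (Finset.mem_univ a)

lemma smJ_apply_norm_le (θ : EuclideanSpace ℝ A) (v : EuclideanSpace ℝ A) :
    ‖smJ θ v‖ ≤ ‖v‖ := by
  set m : ℝ := ∑ b : A, softmax θ b * v b with hm
  rw [EuclideanSpace.norm_eq, EuclideanSpace.norm_eq]
  apply Real.sqrt_le_sqrt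
  have h1 : ∀ a' : A, ‖smJ θ v a'‖ ^ 2 = softmax θ a' ^ 2 * (v a' - m) ^ 2 := by
    intro a'
    rw [smJ_apply, smD_apply, Real.norm_eq_abs, sq_abs, mul_pow]
  calc ∑ a' : A, ‖smJ θ v a'‖ ^ 2
      = ∑ a' : A, softmax θ a' ^ 2 * (v a' - m) ^ 2 := by
        exact Finset.sum_congr rfl fun a' _ => h1 a'
    _ ≤ ∑ a' : A, softmax θ a' * (v a' - m) ^ 2 := by
        refine Finset.sum_le_sum fun a' _ => ?_
        have h2 : softmax θ a' ^ 2 ≤ softmax θ a' := by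
          nlinarith [softmax_pos θ a', softmax_le_one θ a']
        exact mul_le_mul_of_nonneg_right h2 (sq_nonneg _)
    _ = (∑ a' : A, softmax θ a' * v a' ^ 2) - m ^ 2 := by
        have : ∀ a' : A, softmax θ a' * (v a' - m) ^ 2
            = softmax θ a' * v a' ^ 2 - 2 * m * (softmax θ a' * v a')
              + m ^ 2 * softmax θ a' := fun a' => by ring
        rw [Finset.sum_congr rfl fun a' _ => this a', Finset.sum_add_distrib,
          Finset.sum_sub_distrib, ← Finset.mul_sum, ← Finset.mul_sum, ← hm,
          sum_softmax]
        ring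
    _ ≤ ∑ a' : A, softmax θ a' * v a' ^ 2 := by nlinarith [sq_nonneg m]
    _ ≤ ∑ a' : A, ‖v a'‖ ^ 2 := by
        refine Finset.sum_le_sum fun a' _ => ?_
        rw [Real.norm_eq_abs, sq_abs]
        nlinarith [softmax_pos θ a', softmax_le_one θ a', sq_nonneg (v a')]

set_option maxHeartbeats 1000000 in
lemma smJ_norm_le_one (θ : EuclideanSpace ℝ A) : ‖smJ θ‖ ≤ 1 :=
  ContinuousLinearMap.opNorm_le_bound (smJ θ) zero_le_one fun v => by
    rw [one_mul]; exact smJ_apply_norm_le θ v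

lemma lipschitz_aux {E F : Type*} [NormedAddCommGroup E] [NormedSpace ℝ E]
    [NormedAddCommGroup F] [NormedSpace ℝ F] (f : E → F) (f' : E → E →L[ℝ] F)
    (h : ∀ x, HasFDerivAt f (f' x) x) (hb : ∀ x, ‖f' x‖ ≤ 1) (θ θ' : E) :
    ‖f θ - f θ'‖ ≤ ‖θ - θ'‖ := by
  have h := Convex.norm_image_sub_le_of_norm_hasFDerivWithin_le (f := f) (f' := f')
    (s := Set.univ) (C := 1) (fun x _ => (h x).hasFDerivWithinAt) (fun x _ => hb x)
    convex_univ (Set.mem_univ θ') (Set.mem_univ θ)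
  simpa using h

lemma smP_lipschitz (θ θ' : EuclideanSpace ℝ A) : ‖smP θ - smP θ'‖ ≤ ‖θ - θ'‖ :=
  lipschitz_aux (E := EuclideanSpace ℝ A) (F := EuclideanSpace ℝ A) smP smJ hasFDerivAt_smP smJ_norm_le_one θ θ'

lemma smP_norm_le_one (θ : EuclideanSpace ℝ A) : ‖smP θ‖ ≤ 1 := by
  rw [EuclideanSpace.norm_eq, show (1:ℝ) = Real.sqrt 1 by simp]
  apply Real.sqrt_le_sqrt
  calc ∑ a' : A, ‖smP θ a'‖ ^ 2 = ∑ a' : A, softmax θ a' ^ 2 := by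
        refine Finset.sum_congr rfl fun a' _ => ?_
        rw [smP_apply, Real.norm_eq_abs, sq_abs]
    _ ≤ (∑ a' : A, softmax θ a') ^ 2 :=
        Finset.sum_sq_le_sq_sum_of_nonneg fun a' _ => (softmax_pos θ a').le
    _ = 1 := by rw [sum_softmax]; norm_num

/-- The gradient vector of `η ↦ softmax η a`. -/
noncomputable def smG (θ : EuclideanSpace ℝ A) (a : A) : EuclideanSpace ℝ A :=
  (EuclideanSpace.equiv A ℝ).symm
    (fun a' => softmax θ a * ((if a' = a then (1:ℝ) else 0) - softmax θ a'))

lemma smG_apply (θ : EuclideanSpace ℝ A) (a a' : A) :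
    smG θ a a' = softmax θ a * ((if a' = a then (1:ℝ) else 0) - softmax θ a') := rfl

lemma hasGradientAt_softmax (θ : EuclideanSpace ℝ A) (a : A) :
    HasGradientAt (fun η : EuclideanSpace ℝ A => softmax η a) (smG θ a) θ := by
  rw [hasGradientAt_iff_hasFDerivAt]
  refine (hasFDerivAt_softmax θ a).congr_fderiv ?_
  ext v
  rw [smD_apply]
  rw [InnerProductSpace.toDual_apply_apply, PiLp.inner_apply]
  simp only [RCLike.inner_apply, conj_trivial, smG_apply]
  have key : ∀ a' : A, softmax θ a * ((if a' = a then (1:ℝ) else 0) - softmax θ a') * v a'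
      = softmax θ a * ((if a' = a then v a' else 0) - softmax θ a' * v a') := by
    intro a'
    by_cases h : a' = a <;> simp [h] <;> ring
  rw [Finset.sum_congr rfl fun a' _ => mul_comm (v a') _]
  rw [Finset.sum_congr rfl fun a' _ => key a', ← Finset.mul_sum, Finset.sum_sub_distrib,
    Finset.sum_ite_eq' Finset.univ a fun a' => v a']
  simp

end aux

theorem softmax_gradient_lipschitz
    {A : Type*} [Fintype A] [Nonempty A] [DecidableEq A]
    (θ θ' : EuclideanSpace ℝ A) (a : A) :
    gradient (fun η : EuclideanSpace ℝ A => softmax η a) θ =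
      (EuclideanSpace.equiv A ℝ).symm
        (fun a' => softmax θ a * ((if a' = a then (1 : ℝ) else 0) - softmax θ a')) ∧
    ‖gradient (fun η : EuclideanSpace ℝ A => softmax η a) θ -
        gradient (fun η : EuclideanSpace ℝ A => softmax η a) θ'‖ ≤ 3 * ‖θ - θ'‖ := by
  have hg : ∀ η : EuclideanSpace ℝ A,
      gradient (fun η : EuclideanSpace ℝ A => softmax η a) η = smG η a := fun η =>
    (hasGradientAt_softmax η a).gradient
  refine ⟨hg θ, ?_⟩
  rw [hg θ, hg θ']
  have hdecomp : smG θ a - smG θ' a =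
      (softmax θ a - softmax θ' a) • (EuclideanSpace.single a (1:ℝ) - smP θ)
        + softmax θ' a • (smP θ' - smP θ) := by
    ext a'
    simp only [PiLp.add_apply, PiLp.sub_apply, PiLp.smul_apply, smul_eq_mul,
      EuclideanSpace.single_apply, smP_apply, smG_apply]
    ring
  rw [hdecomp]
  have h1 : |softmax θ a - softmax θ' a| ≤ ‖smP θ - smP θ'‖ := by
    have h := coord_abs_le_norm (smP θ - smP θ') a
    simpa [smP_apply] using h
  have h2 : ‖EuclideanSpace.single a (1:ℝ) - smP θ‖ ≤ 2 := by
    calc ‖EuclideanSpace.single a (1:ℝ) - smP θ‖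
        ≤ ‖EuclideanSpace.single a (1:ℝ)‖ + ‖smP θ‖ := norm_sub_le _ _
      _ ≤ 1 + 1 := by
          refine add_le_add ?_ (smP_norm_le_one θ)
          rw [EuclideanSpace.norm_single]
          norm_num
      _ = 2 := by norm_num
  have h3 : ‖smP θ' - smP θ‖ ≤ ‖θ - θ'‖ := by
    rw [norm_sub_rev]
    exact smP_lipschitz θ θ'
  have h4 := smP_lipschitz θ θ'
  calc ‖(softmax θ a - softmax θ' a) • (EuclideanSpace.single a (1:ℝ) - smP θ)
        + softmax θ' a • (smP θ' - smP θ)‖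
      ≤ ‖(softmax θ a - softmax θ' a) • (EuclideanSpace.single a (1:ℝ) - smP θ)‖
        + ‖softmax θ' a • (smP θ' - smP θ)‖ := norm_add_le _ _
    _ = |softmax θ a - softmax θ' a| * ‖EuclideanSpace.single a (1:ℝ) - smP θ‖
        + |softmax θ' a| * ‖smP θ' - smP θ‖ := by
          rw [norm_smul, norm_smul, Real.norm_eq_abs, Real.norm_eq_abs]
    _ ≤ ‖θ - θ'‖ * 2 + 1 * ‖θ - θ'‖ := by
        refine add_le_add (mul_le_mul ?_ h2 (norm_nonneg _) (norm_nonneg _))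
          (mul_le_mul ?_ h3 (norm_nonneg _) zero_le_one)
        · exact h1.trans h4
        · rw [abs_of_pos (softmax_pos θ' a)]; exact softmax_le_one θ' a
    _ = 3 * ‖θ - θ'‖ := by ring
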